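/- Let d ≥ 1, λ > 0, σ > 0, 0 ≤ x ≤ L, and define T(x) = (1/(λ^(d/2) σ²)) ∫ₓᴸ z^(1-d) e^(λ z²) γ(d/2, λ z²) dz. Then T(x) ≤ (2/(σ² d (d+2))) · ( (1/λ)(e^(λ L²) − e^(λ x²)) + (d/2)(L² − x²) ). -/

import Mathlib

noncomputable def lowerGamma (a x : ℝ) : ℝ := ∫ t in (0:ℝ)..x, t ^ (a - 1) * Real.exp (-t)

noncomputable def mfet (d : ℕ) (lam σ x L : ℝ) : ℝ :=
  (1 / (lam ^ ((d : ℝ) / 2) * σ ^ 2)) *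
    ∫ z in x..L, z ^ ((1 : ℝ) - d) * Real.exp (lam * z ^ 2) * lowerGamma ((d : ℝ) / 2) (lam * z ^ 2)

open MeasureTheory intervalIntegral Set

lemma lowerGamma_nonneg (a y : ℝ) (hy : 0 ≤ y) : 0 ≤ lowerGamma a y := by
  apply intervalIntegral.integral_nonneg hy
  intro t ht
  exact mul_nonneg (Real.rpow_nonneg ht.1 _) (Real.exp_nonneg _)

lemma exp_int {c : ℝ} (x y : ℝ) :
    IntervalIntegrable (fun t : ℝ => Real.exp (c * t)) MeasureTheory.volume x y :=
  (Real.continuous_exp.comp (continuous_const.mul continuous_id)).intervalIntegrable x y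

lemma lowerGamma_le (a : ℝ) (ha : 0 < a) (y : ℝ) (hy : 0 ≤ y) :
    lowerGamma a y ≤ y ^ a / (a * (a + 1)) + y ^ a * Real.exp (-y) / (a + 1) := by
  have ha1 : (0:ℝ) < a + 1 := by linarith
  have hint1 : IntervalIntegrable (fun t : ℝ => t ^ (a - 1)) volume 0 y :=
    intervalIntegrable_rpow' (by linarith)
  have hint1' : IntervalIntegrable (fun t : ℝ => t ^ a) volume 0 y :=
    intervalIntegrable_rpow' (by linarith)
  have hexp : Continuous (fun t : ℝ => Real.exp (-t)) := by fun_prop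
  have hintLHS : IntervalIntegrable (fun t : ℝ => t ^ (a - 1) * Real.exp (-t)) volume 0 y :=
    hint1.mul_continuousOn hexp.continuousOn
  have hint2 : IntervalIntegrable
      (fun t : ℝ => (a * t ^ (a - 1) - t ^ a) * Real.exp (-t)) volume 0 y :=
    ((hint1.const_mul a).sub hint1').mul_continuousOn hexp.continuousOn
  -- FTC computations
  have h1 : (∫ t in (0:ℝ)..y, t ^ (a - 1)) = y ^ a / a := by
    rw [integral_rpow (Or.inl (by linarith))]
    rw [Real.zero_rpow (by linarith : a - 1 + 1 ≠ 0)]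
    rw [show a - 1 + 1 = a by ring]
    ring
  have h2 : (∫ t in (0:ℝ)..y, (a * t ^ (a - 1) - t ^ a) * Real.exp (-t))
      = y ^ a * Real.exp (-y) := by
    have hcont : ContinuousOn (fun t : ℝ => t ^ a * Real.exp (-t)) (Icc 0 y) :=
      ((Real.continuous_rpow_const ha.le).mul hexp).continuousOn
    have hderiv : ∀ t ∈ Ioo (0:ℝ) y,
        HasDerivAt (fun t : ℝ => t ^ a * Real.exp (-t))
          ((a * t ^ (a - 1) - t ^ a) * Real.exp (-t)) t := by
      intro t ht
      have hpow : HasDerivAt (fun t : ℝ => t ^ a) (a * t ^ (a - 1)) t :=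
        Real.hasDerivAt_rpow_const (Or.inl ht.1.ne')
      have hexp' : HasDerivAt (fun t : ℝ => Real.exp (-t)) (-Real.exp (-t)) t := by
        simpa using (hasDerivAt_neg t).exp
      have := hpow.mul hexp'
      exact this.congr_deriv (by ring)
    rw [integral_eq_sub_of_hasDerivAt_of_le hy hcont hderiv hint2]
    rw [Real.zero_rpow ha.ne']
    ring
  have hmono : lowerGamma a y ≤
      ∫ t in (0:ℝ)..y, (t ^ (a - 1) / (a + 1)
        + (a * t ^ (a - 1) - t ^ a) * Real.exp (-t) / (a + 1)) := by
    apply intervalIntegral.integral_mono_on hy hintLHS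
      ((hint1.div_const _).add (hint2.div_const _))
    intro t ht
    rcases eq_or_lt_of_le ht.1 with h0 | h0
    · -- t = 0
      subst h0
      rw [Real.zero_rpow ha.ne']
      simp [neg_zero, Real.exp_zero]
      rw [div_add_div _ _ (by linarith) (by linarith)]
      rw [le_div_iff₀ (by positivity)]
      ring_nf
      nlinarith [Real.rpow_nonneg (le_refl (0:ℝ)) (a-1)]
    · -- 0 < t
      have hp : (0:ℝ) < t ^ (a - 1) := Real.rpow_pos_of_pos h0 _
      have hexp_le : Real.exp (-t) * (1 + t) ≤ 1 := by
        have h := Real.add_one_le_exp t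
        rw [Real.exp_neg]
        rw [inv_mul_le_iff₀ (Real.exp_pos t)]
        linarith
      have hta : t ^ a = t ^ (a - 1) * t := by
        rw [← Real.rpow_add_one h0.ne' (a - 1)]
        ring_nf
      rw [← add_div, le_div_iff₀ ha1, hta]
      have hE : (0:ℝ) < Real.exp (-t) := Real.exp_pos _
      nlinarith [mul_le_mul_of_nonneg_left hexp_le hp.le]
  calc lowerGamma a y ≤ _ := hmono
    _ = y ^ a / (a * (a + 1)) + y ^ a * Real.exp (-y) / (a + 1) := by
        rw [intervalIntegral.integral_add (hint1.div_const _) (hint2.div_const _),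
          intervalIntegral.integral_div, intervalIntegral.integral_div, h1, h2]
        field_simp

theorem mfet_upper_bound_sharp (d : ℕ) (hd : 1 ≤ d) (lam σ x L : ℝ) (hlam : 0 < lam)
    (hσ : 0 < σ) (hx : 0 ≤ x) (hxL : x ≤ L) :
    mfet d lam σ x L ≤ (2 / (σ ^ 2 * d * (d + 2))) *
      ((1 / lam) * (Real.exp (lam * L ^ 2) - Real.exp (lam * x ^ 2)) +
        ((d : ℝ) / 2) * (L ^ 2 - x ^ 2)) := by
  have hd0 : (0:ℝ) < (d:ℝ) := by exact_mod_cast Nat.lt_of_lt_of_le Nat.zero_lt_one hd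
  set a : ℝ := (d : ℝ) / 2 with ha_def
  have ha : 0 < a := by positivity
  have ha1 : (0:ℝ) < a + 1 := by linarith
  have hP : (0:ℝ) < lam ^ a := Real.rpow_pos_of_pos hlam a
  -- the dominating function
  set g : ℝ → ℝ := fun z => lam ^ a / (a * (a + 1)) * (z * Real.exp (lam * z ^ 2) + a * z)
    with hg_def
  have hgcont : Continuous g := by fun_prop
  -- pointwise bound
  have hbound : ∀ z ∈ Icc x L,
      z ^ ((1 : ℝ) - d) * Real.exp (lam * z ^ 2) * lowerGamma a (lam * z ^ 2) ≤ g z := by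
    intro z hz
    have hz0 : 0 ≤ z := le_trans hx hz.1
    rcases eq_or_lt_of_le hz0 with h0 | h0
    · subst h0
      have : lowerGamma a (lam * 0 ^ 2) = 0 := by
        simp [lowerGamma]
      rw [this]
      simp [hg_def]
    · -- z > 0
      have hy : (0:ℝ) ≤ lam * z ^ 2 := by positivity
      have hγ := lowerGamma_le a ha (lam * z ^ 2) hy
      have hnn : (0:ℝ) ≤ z ^ ((1 : ℝ) - d) * Real.exp (lam * z ^ 2) :=
        mul_nonneg (Real.rpow_nonneg hz0 _) (Real.exp_nonneg _)
      have key : z ^ ((1 : ℝ) - d) * (lam * z ^ 2) ^ a = lam ^ a * z := by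
        rw [Real.mul_rpow hlam.le (by positivity)]
        have hz2 : (z ^ 2 : ℝ) ^ a = z ^ ((d : ℝ)) := by
          rw [← Real.rpow_natCast z 2, ← Real.rpow_mul hz0]
          congr 1
          push_cast
          rw [ha_def]
          ring
        rw [hz2]
        rw [show z ^ ((1:ℝ) - (d:ℝ)) * (lam ^ a * z ^ ((d:ℝ))) =
          lam ^ a * (z ^ ((1:ℝ) - (d:ℝ)) * z ^ ((d:ℝ))) from by ring,
          ← Real.rpow_add h0, show (1:ℝ) - (d:ℝ) + (d:ℝ) = 1 from by ring, Real.rpow_one]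
      calc z ^ ((1 : ℝ) - d) * Real.exp (lam * z ^ 2) * lowerGamma a (lam * z ^ 2)
          ≤ z ^ ((1 : ℝ) - d) * Real.exp (lam * z ^ 2) *
            ((lam * z ^ 2) ^ a / (a * (a + 1))
              + (lam * z ^ 2) ^ a * Real.exp (-(lam * z ^ 2)) / (a + 1)) :=
            mul_le_mul_of_nonneg_left hγ hnn
        _ = (z ^ ((1 : ℝ) - d) * (lam * z ^ 2) ^ a) *
              (Real.exp (lam * z ^ 2) / (a * (a + 1)))
            + (z ^ ((1 : ℝ) - d) * (lam * z ^ 2) ^ a) *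
              (Real.exp (lam * z ^ 2) * Real.exp (-(lam * z ^ 2)) / (a + 1)) := by
            ring
        _ = (lam ^ a * z) * (Real.exp (lam * z ^ 2) / (a * (a + 1)))
            + (lam ^ a * z) * (1 / (a + 1)) := by
            rw [key, ← Real.exp_add]
            norm_num
        _ = g z := by
            rw [hg_def]
            field_simp
  -- continuity of lowerGamma a
  have hGammaCont : Continuous (lowerGamma a) := by
    apply intervalIntegral.continuous_primitive
    intro u v
    exact (intervalIntegrable_rpow' (by linarith)).mul_continuousOn
      ((Real.continuous_exp.comp continuous_neg).continuousOn)
  -- integrability of the integrand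
  have hIntg : IntervalIntegrable g volume x L := hgcont.intervalIntegrable x L
  have hnonneg : ∀ z ∈ Icc x L,
      0 ≤ z ^ ((1 : ℝ) - d) * Real.exp (lam * z ^ 2) * lowerGamma a (lam * z ^ 2) := by
    intro z hz
    have hz0 : 0 ≤ z := le_trans hx hz.1
    exact mul_nonneg (mul_nonneg (Real.rpow_nonneg hz0 _) (Real.exp_nonneg _))
      (lowerGamma_nonneg a _ (by positivity))
  have hInth : IntervalIntegrable
      (fun z => z ^ ((1 : ℝ) - d) * Real.exp (lam * z ^ 2) * lowerGamma a (lam * z ^ 2))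
      volume x L := by
    rw [intervalIntegrable_iff_integrableOn_Icc_of_le hxL]
    apply (hgcont.integrableOn_Icc).mono'
    · apply Measurable.aestronglyMeasurable
      apply Measurable.mul
      · apply Measurable.mul
        · fun_prop
        · fun_prop
      · exact hGammaCont.measurable.comp (by fun_prop)
    · filter_upwards [ae_restrict_mem measurableSet_Icc] with z hz
      rw [Real.norm_eq_abs, abs_of_nonneg (hnonneg z hz)]
      exact hbound z hz
  -- compare integrals
  have hmono : (∫ z in x..L,
        z ^ ((1 : ℝ) - d) * Real.exp (lam * z ^ 2) * lowerGamma a (lam * z ^ 2))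
      ≤ ∫ z in x..L, g z :=
    intervalIntegral.integral_mono_on hxL hInth hIntg hbound
  -- compute ∫ g
  have hIexp : (∫ z in x..L, z * Real.exp (lam * z ^ 2))
      = (Real.exp (lam * L ^ 2) - Real.exp (lam * x ^ 2)) / (2 * lam) := by
    have hderiv : ∀ z ∈ uIcc x L,
        HasDerivAt (fun w : ℝ => Real.exp (lam * w ^ 2) / (2 * lam))
          (z * Real.exp (lam * z ^ 2)) z := by
      intro z _
      have h1 : HasDerivAt (fun w : ℝ => lam * w ^ 2) (lam * (2 * z)) z := by
        simpa using ((hasDerivAt_pow 2 z).const_mul lam)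
      have := (h1.exp).div_const (2 * lam)
      exact this.congr_deriv (by rw [div_eq_iff (by positivity)]; ring)
    rw [intervalIntegral.integral_eq_sub_of_hasDerivAt hderiv
      ((by fun_prop : Continuous (fun z : ℝ => z * Real.exp (lam * z ^ 2))).intervalIntegrable x L)]
    ring
  have hIg : (∫ z in x..L, g z) = lam ^ a / (a * (a + 1)) *
      ((Real.exp (lam * L ^ 2) - Real.exp (lam * x ^ 2)) / (2 * lam) + a * ((L ^ 2 - x ^ 2) / 2)) := by
    simp only [hg_def]
    rw [intervalIntegral.integral_const_mul]
    congr 1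
    rw [intervalIntegral.integral_add
      ((by fun_prop : Continuous (fun z : ℝ => z * Real.exp (lam * z ^ 2))).intervalIntegrable x L)
      ((by fun_prop : Continuous (fun z : ℝ => a * z)).intervalIntegrable x L),
      intervalIntegral.integral_const_mul, integral_id, hIexp]
  -- put it together
  have hc0 : (0:ℝ) < 1 / (lam ^ a * σ ^ 2) := by positivity
  have : mfet d lam σ x L ≤ (1 / (lam ^ a * σ ^ 2)) * ∫ z in x..L, g z := by
    unfold mfet
    exact mul_le_mul_of_nonneg_left hmono hc0.le
  refine le_trans this ?_
  rw [hIg]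
  have heq : (1 / (lam ^ a * σ ^ 2)) * (lam ^ a / (a * (a + 1)) *
      ((Real.exp (lam * L ^ 2) - Real.exp (lam * x ^ 2)) / (2 * lam) + a * ((L ^ 2 - x ^ 2) / 2)))
      = (2 / (σ ^ 2 * d * (d + 2))) *
      ((1 / lam) * (Real.exp (lam * L ^ 2) - Real.exp (lam * x ^ 2)) +
        ((d : ℝ) / 2) * (L ^ 2 - x ^ 2)) := by
    rw [ha_def]
    field_simp
  rw [heq]
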